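/- Let X be a continuous real random variable (atomless law) with ess inf X = L > -∞ and A(θ) = log E[exp(θX)] finite for all θ ≤ 0. Then lim_{l↓L} A*(l) = ∞, where A*(l) = sup_θ(θl - A(θ)) is the Cramér rate function. -/

import Mathlib

open MeasureTheory

/-- Let `X` be a real random variable with atomless law, supported in `[L, ∞)` with
`L` the infimum of the support, and with cumulant generating function
`A θ = log E[exp (θ X)]` finite for all `θ ≤ 0`. Then the Cramér rate function
`A* l = sup_{θ ≤ 0} (θ l - A θ)` tends to `∞` as `l ↓ L`. -/
theorem tendsto_rateFn_atTop_of_atomless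
    {Ω : Type*} [MeasurableSpace Ω] (μ : Measure Ω) [IsProbabilityMeasure μ]
    (X : Ω → ℝ) (hX : Measurable X) (L : ℝ)
    (hbound : ∀ᵐ ω ∂μ, L ≤ X ω)
    (hatomless : ∀ c : ℝ, μ {ω | X ω = c} = 0)
    (hsupport : ∀ l : ℝ, L < l → 0 < μ {ω | X ω < l})
    (hint : ∀ θ : ℝ, θ ≤ 0 → Integrable (fun ω => Real.exp (θ * X ω)) μ)
    (A : ℝ → ℝ) (hA : ∀ θ, A θ = Real.log (∫ ω, Real.exp (θ * X ω) ∂μ))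
    (Astar : ℝ → ℝ)
    (hAstar : ∀ l, Astar l = sSup {y | ∃ θ ≤ (0 : ℝ), y = θ * l - A θ}) :
    Filter.Tendsto Astar (nhdsWithin L (Set.Ioi L)) Filter.atTop := by
  rw [Filter.tendsto_atTop]
  intro M
  set ε : ℝ := min (Real.exp (-(M + 1)) / 2) (1 / 2) with hεdef
  have hεpos : 0 < ε := lt_min (by positivity) (by norm_num)
  -- find m > L with small mass below m
  obtain ⟨m, hmL, hmε⟩ : ∃ m, L < m ∧ (μ {ω | X ω < m}).toReal < ε := by
    set s : ℕ → Set Ω := fun n => {ω | X ω < L + 1 / (n + 1)} with hs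
    have hsm : ∀ n : ℕ, MeasurableSet (s n) := fun n =>
      measurableSet_lt hX measurable_const
    have hanti : Antitone s := by
      intro a b hab ω hω
      simp only [hs, Set.mem_setOf_eq] at *
      have hab' : (a : ℝ) ≤ b := Nat.cast_le.2 hab
      have hba : (1 : ℝ) / (b + 1) ≤ 1 / (a + 1) := by
        apply one_div_le_one_div_of_le
        · positivity
        · linarith
      linarith
    have hInter : (⋂ n, s n) = {ω | X ω ≤ L} := by
      ext ω
      simp only [Set.mem_iInter, hs, Set.mem_setOf_eq]
      constructor
      · intro h
        by_contra hlt
        push_neg at hlt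
        obtain ⟨n, hn⟩ := exists_nat_one_div_lt (show 0 < X ω - L by linarith)
        have := h n
        linarith
      · intro h n
        have : (0 : ℝ) < 1 / (n + 1) := by positivity
        linarith
    have hzero : μ {ω | X ω ≤ L} = 0 := by
      have h1 : μ {ω | X ω < L} = 0 := by
        have : {ω | X ω < L} ⊆ {ω | ¬ L ≤ X ω} := fun ω hω => not_le.2 hω
        exact measure_mono_null this hbound
      have hsub : {ω | X ω ≤ L} ⊆ {ω | X ω < L} ∪ {ω | X ω = L} := by
        intro ω hω
        rcases lt_or_eq_of_le (show X ω ≤ L from hω) with h | h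
        · exact Or.inl h
        · exact Or.inr h
      exact measure_mono_null hsub
        (measure_union_null h1 (hatomless L))
    have htend := tendsto_measure_iInter_atTop
      (fun n => (hsm n).nullMeasurableSet) hanti ⟨0, measure_ne_top μ _⟩
    rw [hInter, hzero] at htend
    have hev : ∀ᶠ n in Filter.atTop, μ (s n) < ENNReal.ofReal ε :=
      htend.eventually_lt_const (by simpa using hεpos)
    obtain ⟨n, hn⟩ := hev.exists
    have hpos : (0:ℝ) < 1 / ((n:ℝ) + 1) := by positivity
    exact ⟨L + 1 / (n + 1), by linarith, ENNReal.toReal_lt_of_lt_ofReal hn⟩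
  set p := (μ {ω | X ω < m}).toReal with hpdef
  have hμm_ne_top : μ {ω | X ω < m} ≠ ⊤ := measure_ne_top μ _
  have hp0 : 0 < p := ENNReal.toReal_pos (hsupport m hmL).ne' hμm_ne_top
  have hp_half : p < 1 / 2 := lt_of_lt_of_le hmε (min_le_right _ _)
  have hp_exp : p < Real.exp (-(M + 1)) / 2 :=
    lt_of_lt_of_le hmε (min_le_left _ _)
  have hp1 : p < 1 := by linarith
  have hlogp : Real.log p < 0 := Real.log_neg hp0 hp1
  set θ := Real.log p / (m - L) with hθdef
  have hmL' : 0 < m - L := by linarith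
  have hθneg : θ < 0 := div_neg_of_neg_of_pos hlogp hmL'
  have hθ0 : θ ≤ 0 := hθneg.le
  have hintθ := hint θ hθ0
  have hIpos : 0 < ∫ ω, Real.exp (θ * X ω) ∂μ := by
    have := ProbabilityTheory.mgf_pos (X := X) (μ := μ) (t := θ) hintθ
    simpa [ProbabilityTheory.mgf] using this
  have hsplit : MeasurableSet {ω | X ω < m} := measurableSet_lt hX measurable_const
  -- upper bound for the integral
  have hI1 : ∫ ω in {ω | X ω < m}, Real.exp (θ * X ω) ∂μ ≤ Real.exp (θ * L) * p := by
    have h := setIntegral_mono_on_ae hintθ.integrableOn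
      (integrableOn_const hμm_ne_top) hsplit
      (g := fun _ => Real.exp (θ * L)) ?_
    · rwa [setIntegral_const, smul_eq_mul, mul_comm] at h
    · filter_upwards [hbound] with ω hω _
      exact Real.exp_le_exp.2 (mul_le_mul_of_nonpos_left hω hθ0)
  have hI2 : ∫ ω in {ω | X ω < m}ᶜ, Real.exp (θ * X ω) ∂μ ≤ Real.exp (θ * m) := by
    have h := setIntegral_mono_on hintθ.integrableOn
      (integrableOn_const (measure_ne_top μ _)) hsplit.compl
      (g := fun _ => Real.exp (θ * m)) ?_
    · rw [setIntegral_const, smul_eq_mul] at h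
      refine h.trans ?_
      have h1 : (μ {ω | X ω < m}ᶜ).toReal ≤ 1 := by
        have := prob_le_one (μ := μ) (s := {ω | X ω < m}ᶜ)
        simpa using ENNReal.toReal_mono (by norm_num) this
      have h1' : μ.real {ω | X ω < m}ᶜ ≤ 1 := h1
      nlinarith [Real.exp_pos (θ * m)]
    · intro ω hω
      have : m ≤ X ω := not_lt.1 hω
      exact Real.exp_le_exp.2 (mul_le_mul_of_nonpos_left this hθ0)
  have hexp : Real.exp (θ * m) = Real.exp (θ * L) * p := by
    have hθm : θ * (m - L) = Real.log p := by
      rw [hθdef]; field_simp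
    rw [← Real.exp_log hp0, ← Real.exp_add]
    congr 1
    nlinarith [hθm]
  have hIsum : ∫ ω, Real.exp (θ * X ω) ∂μ ≤ Real.exp (θ * L) * (2 * p) := by
    have := integral_add_compl hsplit hintθ
    nlinarith [hI1, hI2, hexp, this]
  have hAθ : A θ ≤ θ * L + Real.log (2 * p) := by
    rw [hA]
    calc Real.log (∫ ω, Real.exp (θ * X ω) ∂μ)
        ≤ Real.log (Real.exp (θ * L) * (2 * p)) := Real.log_le_log hIpos hIsum
      _ = θ * L + Real.log (2 * p) := by
          rw [Real.log_mul (Real.exp_ne_zero _) (by positivity), Real.log_exp]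
  have hlog2p : Real.log (2 * p) < -(M + 1) := by
    have : (2 : ℝ) * p < Real.exp (-(M + 1)) := by linarith
    calc Real.log (2 * p) < Real.log (Real.exp (-(M + 1))) :=
          Real.log_lt_log (by positivity) this
      _ = -(M + 1) := Real.log_exp _
  set δ : ℝ := 1 / (-θ) with hδdef
  have hδpos : 0 < δ := by
    rw [hδdef]; exact one_div_pos.2 (neg_pos.2 hθneg)
  filter_upwards [Ioo_mem_nhdsGT_of_mem
    (Set.left_mem_Ico.2 (by linarith : L < L + δ))] with l hl
  rw [hAstar]
  have hbdd : BddAbove {y | ∃ θ' ≤ (0 : ℝ), y = θ' * l - A θ'} := by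
    set m' := (L + l) / 2 with hm'def
    have hm'1 : L < m' := by rw [hm'def]; linarith [hl.1]
    have hm'2 : m' ≤ l := by rw [hm'def]; linarith [hl.1]
    set q := (μ {ω | X ω < m'}).toReal with hqdef
    have hq0 : 0 < q := ENNReal.toReal_pos (hsupport m' hm'1).ne' (measure_ne_top μ _)
    refine ⟨-Real.log q, ?_⟩
    rintro y ⟨θ', hθ', rfl⟩
    have hlow : θ' * m' + Real.log q ≤ A θ' := by
      rw [hA]
      have h1 : Real.exp (θ' * m') * q ≤
          ∫ ω in {ω | X ω < m'}, Real.exp (θ' * X ω) ∂μ :=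
        setIntegral_ge_of_const_le_real (measurableSet_lt hX measurable_const)
          (measure_ne_top μ _)
          (fun ω hω =>
            Real.exp_le_exp.2 (mul_le_mul_of_nonpos_left (le_of_lt hω) hθ'))
          (hint θ' hθ').integrableOn
      have h2 : ∫ ω in {ω | X ω < m'}, Real.exp (θ' * X ω) ∂μ ≤
          ∫ ω, Real.exp (θ' * X ω) ∂μ :=
        setIntegral_le_integral (hint θ' hθ')
          (Filter.Eventually.of_forall fun ω => (Real.exp_pos _).le)
      have hlog := Real.log_le_log (by positivity) (h1.trans h2)
      rwa [Real.log_mul (Real.exp_ne_zero _) hq0.ne', Real.log_exp] at hlog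
    nlinarith [mul_nonpos_of_nonpos_of_nonneg hθ' (by linarith : (0:ℝ) ≤ l - m')]
  have hmem : θ * l - A θ ∈ {y | ∃ θ' ≤ (0 : ℝ), y = θ' * l - A θ'} :=
    ⟨θ, hθ0, rfl⟩
  have hle := le_csSup hbdd hmem
  have h1 : (l - L) * (-θ) < 1 := by
    have := hl.2
    have hlL : l - L < 1 / (-θ) := by rw [← hδdef]; linarith
    exact (lt_div_iff₀ (by linarith : (0:ℝ) < -θ)).1 hlL
  have h2 : -1 < θ * l - θ * L := by nlinarith
  linarith
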